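/- arXiv:1412.5321 — 2 statements merged into one kernel-verified Lean document; each statement's English description precedes it below -/
import Mathlib

section
/- Let ‖·‖₀ and ‖·‖₁ be norms on ℂⁿ and let ‖·‖_λ be the complex interpolation norm for λ ∈ [0,1]. Then the dual norms satisfy ‖z‖_λ* ≤ (‖z‖₀*)^{1-λ} (‖z‖₁*)^λ for every z ∈ ℂⁿ. -/
open MeasureTheory Set

noncomputable section

/-- A complex body in ℂⁿ ≅ ℝ^{2n}: convex, origin-symmetric, compact, nonempty
interior, and invariant under complex rotations. -/
def IsCxBody {n : ℕ} (K : Set (Fin n → ℂ)) : Prop :=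
  Convex ℝ K ∧ K = -K ∧ IsCompact K ∧ (interior K).Nonempty ∧
    ∀ φ : ℝ, (fun z : Fin n → ℂ => fun j => Complex.exp (φ * Complex.I) * z j) '' K = K

/-- The real inner product Re⟨x, θ⟩ on ℂⁿ ≅ ℝ^{2n}. -/
def crinner {n : ℕ} (x θ : Fin n → ℂ) : ℝ := (∑ j, x j * (starRingEnd ℂ) (θ j)).re

/-- Support function of a set in ℂⁿ, with respect to the real inner product. -/
def csuppFn {n : ℕ} (K : Set (Fin n → ℂ)) (θ : Fin n → ℂ) : ℝ :=
  sSup ((fun x => crinner x θ) '' K)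

/-- Logarithmic mean of two bodies in ℂⁿ. -/
def clogMean {n : ℕ} (l : ℝ) (K T : Set (Fin n → ℂ)) : Set (Fin n → ℂ) :=
  {x | ∀ θ, crinner x θ ≤ csuppFn K θ ^ (1 - l) * csuppFn T θ ^ l}
/-- `N` is a norm on ℂⁿ. -/
def IsNormC {n : ℕ} (N : (Fin n → ℂ) → ℝ) : Prop :=
  (∀ x, 0 ≤ N x) ∧ (∀ x, N x = 0 ↔ x = 0) ∧
  (∀ (a : ℂ) (x), N (a • x) = ‖a‖ * N x) ∧
  (∀ x y, N (x + y) ≤ N x + N y)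

/-- Closed strip 0 ≤ Re w ≤ 1. -/
def closedStrip : Set ℂ := {w | w.re ∈ Icc (0 : ℝ) 1}

/-- Open strip 0 < Re w < 1. -/
def openStrip : Set ℂ := {w | w.re ∈ Ioo (0 : ℝ) 1}

/-- Membership in the interpolation family 𝓕: bounded and continuous on the closed
strip, analytic on the open strip, tending to 0 at ±i∞ on both boundary lines. -/
def MemF {n : ℕ} (f : ℂ → Fin n → ℂ) : Prop :=
  ContinuousOn f closedStrip ∧ DifferentiableOn ℂ f openStrip ∧
  (∃ C, ∀ w ∈ closedStrip, ‖f w‖ ≤ C) ∧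
  Filter.Tendsto (fun t : ℝ => f (t * Complex.I)) Filter.atTop (nhds 0) ∧
  Filter.Tendsto (fun t : ℝ => f (t * Complex.I)) Filter.atBot (nhds 0) ∧
  Filter.Tendsto (fun t : ℝ => f (1 + t * Complex.I)) Filter.atTop (nhds 0) ∧
  Filter.Tendsto (fun t : ℝ => f (1 + t * Complex.I)) Filter.atBot (nhds 0)

/-- The norm on the family 𝓕. -/
def fNorm {n : ℕ} (N0 N1 : (Fin n → ℂ) → ℝ) (f : ℂ → Fin n → ℂ) : ℝ :=
  max (⨆ t : ℝ, N0 (f (t * Complex.I))) (⨆ t : ℝ, N1 (f (1 + t * Complex.I)))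

/-- The complex interpolation norm. -/
def interpNorm {n : ℕ} (N0 N1 : (Fin n → ℂ) → ℝ) (l : ℝ) (x : Fin n → ℂ) : ℝ :=
  sInf (fNorm N0 N1 '' {f | MemF f ∧ f (l : ℂ) = x})

/-- The dual norm ‖z‖* = sup_{N x ≤ 1} |⟨x, z⟩|. -/
def dualNorm {n : ℕ} (N : (Fin n → ℂ) → ℝ) (z : Fin n → ℂ) : ℝ :=
  sSup ((fun x => ‖∑ j, x j * (starRingEnd ℂ) (z j)‖) '' {x | N x ≤ 1})


namespace Stmt7Aux


variable {n : ℕ} {N : (Fin n → ℂ) → ℝ}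

lemma sum_le (hN : IsNormC N) {ι : Type*} (s : Finset ι) (g : ι → Fin n → ℂ) :
    N (∑ j ∈ s, g j) ≤ ∑ j ∈ s, N (g j) := by
  classical
  induction s using Finset.cons_induction with
  | empty => simpa using le_of_eq ((hN.2.1 0).mpr rfl)
  | cons a s ha ih =>
      rw [Finset.sum_cons, Finset.sum_cons]
      exact le_trans (hN.2.2.2 _ _) (by linarith)

/-- Upper bound: N x ≤ C ‖x‖. -/
lemma exists_upper (hN : IsNormC N) : ∃ C : ℝ, 0 ≤ C ∧ ∀ x, N x ≤ C * ‖x‖ := by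
  classical
  refine ⟨∑ j, N (Pi.single j 1), Finset.sum_nonneg fun j _ => hN.1 _, fun x => ?_⟩
  have hx : x = ∑ j, (x j) • (Pi.single j (1 : ℂ) : Fin n → ℂ) := by
    simp_rw [← Pi.single_smul, smul_eq_mul, mul_one]
    exact (Finset.univ_sum_single x).symm
  calc N x ≤ ∑ j, N ((x j) • (Pi.single j (1 : ℂ) : Fin n → ℂ)) := by
        conv_lhs => rw [hx]
        exact sum_le hN _ _
    _ = ∑ j, ‖x j‖ * N (Pi.single j (1 : ℂ)) := by
        simp [hN.2.2.1]
    _ ≤ ∑ j, ‖x‖ * N (Pi.single j (1 : ℂ)) := by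
        refine Finset.sum_le_sum fun j _ => ?_
        exact mul_le_mul_of_nonneg_right (by simpa using norm_le_pi_norm x j) (hN.1 _)
    _ = (∑ j, N (Pi.single j 1)) * ‖x‖ := by rw [← Finset.mul_sum]; ring

lemma continuous_of (hN : IsNormC N) : Continuous N := by
  obtain ⟨C, hC0, hC⟩ := exists_upper hN
  have key : ∀ a b : Fin n → ℂ, |N a - N b| ≤ C * ‖a - b‖ := by
    intro a b
    have h1 : N a ≤ N (a - b) + N b := by
      have h := hN.2.2.2 (a - b) b
      rwa [sub_add_cancel] at h
    have hneg : N (b - a) = N (a - b) := by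
      have hba : (b - a) = (-1 : ℂ) • (a - b) := by funext j; simp
      rw [hba, hN.2.2.1]; simp
    have h2 : N b ≤ N (a - b) + N a := by
      have h := hN.2.2.2 (b - a) a
      rwa [sub_add_cancel, hneg] at h
    have := hC (a - b)
    rw [abs_sub_le_iff]; constructor <;> linarith
  have : LipschitzWith C.toNNReal N := by
    refine LipschitzWith.of_dist_le_mul fun a b => ?_
    rw [Real.dist_eq, dist_eq_norm]
    exact le_trans (key a b) (by rw [Real.coe_toNNReal C hC0])
  exact this.continuous

/-- Lower bound: c ‖x‖ ≤ N x with c > 0. -/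
lemma exists_lower (hN : IsNormC N) : ∃ c : ℝ, 0 < c ∧ ∀ x, c * ‖x‖ ≤ N x := by
  rcases Nat.eq_zero_or_pos n with hn | hn
  · subst hn
    refine ⟨1, one_pos, fun x => ?_⟩
    have hx : x = 0 := Subsingleton.elim _ _
    rw [hx, (hN.2.1 0).mpr rfl, norm_zero, mul_zero]
  · haveI : Nonempty (Fin n) := ⟨⟨0, hn⟩⟩
    haveI : Nontrivial (Fin n → ℂ) := inferInstance
    have hsne : (Metric.sphere (0 : Fin n → ℂ) 1).Nonempty :=
      NormedSpace.sphere_nonempty.mpr zero_le_one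
    obtain ⟨x₀, hx₀, hmin⟩ := (isCompact_sphere (0 : Fin n → ℂ) 1).exists_isMinOn hsne
      (continuous_of hN).continuousOn
    have hx₀norm : ‖x₀‖ = 1 := by simpa using hx₀
    have hx₀ne : x₀ ≠ 0 := by
      intro h; rw [h] at hx₀norm; simp at hx₀norm
    have hc : 0 < N x₀ :=
      lt_of_le_of_ne (hN.1 _) fun h => hx₀ne ((hN.2.1 x₀).mp h.symm)
    refine ⟨N x₀, hc, fun x => ?_⟩
    rcases eq_or_ne x 0 with rfl | hx
    · simpa using hN.1 0
    · have hxn : (0:ℝ) < ‖x‖ := norm_pos_iff.mpr hx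
      have hmem : ((‖x‖⁻¹ : ℝ) : ℂ) • x ∈ Metric.sphere (0 : Fin n → ℂ) 1 := by
        simp [norm_smul, abs_of_pos (inv_pos.mpr hxn), inv_mul_cancel₀ hxn.ne']
      have hmin' : N x₀ ≤ N (((‖x‖⁻¹ : ℝ) : ℂ) • x) := hmin hmem
      have heq : N (((‖x‖⁻¹ : ℝ) : ℂ) • x) = ‖x‖⁻¹ * N x := by
        rw [hN.2.2.1]; simp [abs_of_pos (inv_pos.mpr hxn)]
      rw [heq] at hmin'
      calc N x₀ * ‖x‖ ≤ (‖x‖⁻¹ * N x) * ‖x‖ := by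
            exact mul_le_mul_of_nonneg_right hmin' hxn.le
        _ = N x := by field_simp

/-- The fundamental dual pairing bound. -/
lemma abs_inner_le_dual (hN : IsNormC N) (z y : Fin n → ℂ) :
    ‖∑ j, y j * (starRingEnd ℂ) (z j)‖ ≤ dualNorm N z * N y := by
  obtain ⟨c, hc, hlow⟩ := exists_lower hN
  have hbdd : BddAbove ((fun x => ‖∑ j, x j * (starRingEnd ℂ) (z j)‖) ''
      {x | N x ≤ 1}) := by
    refine ⟨c⁻¹ * ∑ j, ‖z j‖, ?_⟩
    rintro _ ⟨x, hx, rfl⟩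
    calc ‖∑ j, x j * (starRingEnd ℂ) (z j)‖
        ≤ ∑ j, ‖x j * (starRingEnd ℂ) (z j)‖ :=
          norm_sum_le _ _
      _ = ∑ j, ‖x j‖ * ‖z j‖ := by simp [map_mul]
      _ ≤ ∑ j, c⁻¹ * ‖z j‖ := by
          refine Finset.sum_le_sum fun j _ => ?_
          refine mul_le_mul_of_nonneg_right ?_ (norm_nonneg _)
          have h1 : ‖x j‖ ≤ ‖x‖ := by
            simpa using norm_le_pi_norm x j
          have h3 : c * ‖x‖ ≤ 1 := le_trans (hlow x) hx
          have h2 : ‖x‖ ≤ c⁻¹ := by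
            rw [← one_div]
            exact (le_div_iff₀ hc).mpr (by linarith)
          exact le_trans h1 h2
      _ = c⁻¹ * ∑ j, ‖z j‖ := by rw [Finset.mul_sum]
  rcases eq_or_ne y 0 with rfl | hy
  · simp [(hN.2.1 0).mpr rfl]
  · have hNy : 0 < N y :=
      lt_of_le_of_ne (hN.1 _) fun h => hy ((hN.2.1 y).mp h.symm)
    set y' : Fin n → ℂ := (((N y)⁻¹ : ℝ) : ℂ) • y with hy'
    have hNy' : N y' = 1 := by
      rw [hy', hN.2.2.1, Complex.norm_real, Real.norm_eq_abs, abs_of_pos (inv_pos.mpr hNy),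
        inv_mul_cancel₀ hNy.ne']
    have hmem : y' ∈ {x | N x ≤ 1} := le_of_eq hNy'
    have hle : ‖∑ j, y' j * (starRingEnd ℂ) (z j)‖ ≤ dualNorm N z :=
      le_csSup hbdd ⟨y', hmem, rfl⟩
    have hsum : (∑ j, y' j * (starRingEnd ℂ) (z j))
        = (((N y)⁻¹ : ℝ) : ℂ) * ∑ j, y j * (starRingEnd ℂ) (z j) := by
      rw [Finset.mul_sum]
      refine Finset.sum_congr rfl fun j _ => ?_
      simp [hy', mul_assoc]
    rw [hsum, norm_mul] at hle
    have habs : ‖(((N y)⁻¹ : ℝ) : ℂ)‖ = (N y)⁻¹ := by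
      rw [Complex.norm_real, Real.norm_eq_abs, abs_of_pos (inv_pos.mpr hNy)]
    rw [habs] at hle
    calc ‖∑ j, y j * (starRingEnd ℂ) (z j)‖
        = N y * ((N y)⁻¹ * ‖∑ j, y j * (starRingEnd ℂ) (z j)‖) := by
          field_simp
      _ ≤ N y * dualNorm N z := mul_le_mul_of_nonneg_left hle hNy.le
      _ = dualNorm N z * N y := mul_comm _ _

lemma dualNorm_nonneg (N : (Fin n → ℂ) → ℝ) (z : Fin n → ℂ) : 0 ≤ dualNorm N z :=
  Real.sSup_nonneg (by rintro _ ⟨x, _, rfl⟩; exact norm_nonneg _)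

/-- Every `x` has a representing function in the family `𝓕`. -/
lemma memF_witness (l : ℝ) (x : Fin n → ℂ) :
    MemF (fun w => Complex.exp (w ^ 2 - (l : ℂ) ^ 2) • x) := by
  have hre : ∀ w : ℂ, (w ^ 2 - ((l : ℂ)) ^ 2).re = w.re ^ 2 - w.im ^ 2 - l ^ 2 := by
    intro w
    simp only [pow_two, Complex.sub_re, Complex.mul_re, Complex.ofReal_re, Complex.ofReal_im]
    ring
  have hnorm : ∀ w : ℂ, ‖Complex.exp (w ^ 2 - (l : ℂ) ^ 2) • x‖
      = Real.exp (w.re ^ 2 - w.im ^ 2 - l ^ 2) * ‖x‖ := by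
    intro w
    rw [norm_smul, Complex.norm_exp, hre]
  have hcont : Continuous (fun w : ℂ => Complex.exp (w ^ 2 - (l : ℂ) ^ 2) • x) :=
    (Complex.continuous_exp.comp ((continuous_pow 2).sub continuous_const)).smul
      continuous_const
  have hdiff : Differentiable ℂ (fun w : ℂ => Complex.exp (w ^ 2 - (l : ℂ) ^ 2) • x) :=
    (((differentiable_pow 2).sub_const _).cexp).smul_const x
  -- limits
  have hsq_top : Filter.Tendsto (fun t : ℝ => (1 : ℝ) - t ^ 2) Filter.atTop Filter.atBot := by
    have h1 : Filter.Tendsto (fun t : ℝ => t ^ 2) Filter.atTop Filter.atTop :=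
      Filter.tendsto_pow_atTop two_ne_zero
    simpa [sub_eq_add_neg] using Filter.tendsto_atBot_add_const_left Filter.atTop (1 : ℝ)
      (Filter.tendsto_neg_atTop_atBot.comp h1)
  have hsq_bot : Filter.Tendsto (fun t : ℝ => (1 : ℝ) - t ^ 2) Filter.atBot Filter.atBot := by
    have h1 : Filter.Tendsto (fun t : ℝ => t ^ 2) Filter.atBot Filter.atTop := by
      have := (Filter.tendsto_pow_atTop (α := ℝ) two_ne_zero).comp
        Filter.tendsto_neg_atBot_atTop
      simpa [Function.comp_def, neg_sq] using this
    simpa [sub_eq_add_neg] using Filter.tendsto_atBot_add_const_left Filter.atBot (1 : ℝ)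
      (Filter.tendsto_neg_atTop_atBot.comp h1)
  have hg_top : Filter.Tendsto (fun t : ℝ => Real.exp (1 - t ^ 2) * ‖x‖)
      Filter.atTop (nhds 0) := by
    simpa using (Real.tendsto_exp_atBot.comp hsq_top).mul_const ‖x‖
  have hg_bot : Filter.Tendsto (fun t : ℝ => Real.exp (1 - t ^ 2) * ‖x‖)
      Filter.atBot (nhds 0) := by
    simpa using (Real.tendsto_exp_atBot.comp hsq_bot).mul_const ‖x‖
  have hb0 : ∀ t : ℝ, ‖Complex.exp (((t : ℂ) * Complex.I) ^ 2 - (l : ℂ) ^ 2) • x‖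
      ≤ Real.exp (1 - t ^ 2) * ‖x‖ := by
    intro t
    rw [hnorm]
    refine mul_le_mul_of_nonneg_right (Real.exp_le_exp.mpr ?_) (norm_nonneg x)
    simp only [Complex.mul_re, Complex.mul_im, Complex.ofReal_re, Complex.ofReal_im,
      Complex.I_re, Complex.I_im]
    nlinarith [sq_nonneg l, sq_nonneg t]
  have hb1 : ∀ t : ℝ, ‖Complex.exp ((1 + (t : ℂ) * Complex.I) ^ 2 - (l : ℂ) ^ 2) • x‖
      ≤ Real.exp (1 - t ^ 2) * ‖x‖ := by
    intro t
    rw [hnorm]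
    refine mul_le_mul_of_nonneg_right (Real.exp_le_exp.mpr ?_) (norm_nonneg x)
    simp only [Complex.add_re, Complex.add_im, Complex.one_re, Complex.one_im,
      Complex.mul_re, Complex.mul_im, Complex.ofReal_re, Complex.ofReal_im,
      Complex.I_re, Complex.I_im]
    nlinarith [sq_nonneg l, sq_nonneg t]
  refine ⟨hcont.continuousOn, hdiff.differentiableOn, ⟨Real.exp 1 * ‖x‖, ?_⟩,
    squeeze_zero_norm (fun t => by simpa using hb0 t) hg_top,
    squeeze_zero_norm (fun t => by simpa using hb0 t) hg_bot,
    squeeze_zero_norm (fun t => by simpa using hb1 t) hg_top,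
    squeeze_zero_norm (fun t => by simpa using hb1 t) hg_bot⟩
  intro w hw
  rw [hnorm]
  refine mul_le_mul_of_nonneg_right (Real.exp_le_exp.mpr ?_) (norm_nonneg x)
  have h1 : w.re ∈ Icc (0 : ℝ) 1 := hw
  nlinarith [sq_nonneg w.im, sq_nonneg l, h1.1, h1.2]

end Stmt7Aux

/-- The interpolation bound for dual norms. -/
theorem stmt_7 {n : ℕ} (N0 N1 : (Fin n → ℂ) → ℝ) (hN0 : IsNormC N0) (hN1 : IsNormC N1)
    (l : ℝ) (hl : l ∈ Icc (0 : ℝ) 1) (z : Fin n → ℂ) :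
    dualNorm (interpNorm N0 N1 l) z ≤ dualNorm N0 z ^ (1 - l) * dualNorm N1 z ^ l := by
  classical
  obtain ⟨c0, hc0, hlow0⟩ := Stmt7Aux.exists_lower hN0
  obtain ⟨C0, hC00, hup0⟩ := Stmt7Aux.exists_upper hN0
  obtain ⟨C1, hC10, hup1⟩ := Stmt7Aux.exists_upper hN1
  set A := dualNorm N0 z with hA_def
  set B := dualNorm N1 z with hB_def
  have hA : 0 ≤ A := Stmt7Aux.dualNorm_nonneg N0 z
  have hB : 0 ≤ B := Stmt7Aux.dualNorm_nonneg N1 z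
  set M := A ^ (1 - l) * B ^ l with hM_def
  have hM : 0 ≤ M := mul_nonneg (Real.rpow_nonneg hA _) (Real.rpow_nonneg hB _)
  refine Real.sSup_le ?_ hM
  rintro _ ⟨x, hx, rfl⟩
  simp only [Set.mem_setOf_eq] at hx
  -- Key : for every ε > 0 the bound holds up to a factor (1 + ε).
  have key : ∀ ε : ℝ, 0 < ε →
      ‖∑ j, x j * (starRingEnd ℂ) (z j)‖ ≤ M * (1 + ε) := by
    intro ε hε
    -- extract a near-optimal representing function
    have hwitness : (fNorm N0 N1 '' {f | MemF f ∧ f (l : ℂ) = x}).Nonempty := by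
      refine ⟨_, ⟨fun w => Complex.exp (w ^ 2 - (l : ℂ) ^ 2) • x,
        ⟨Stmt7Aux.memF_witness l x, ?_⟩, rfl⟩⟩
      simp
    obtain ⟨_, ⟨f, ⟨hfF, hfl⟩, rfl⟩, hfn⟩ :=
      exists_lt_of_csInf_lt hwitness (lt_of_le_of_lt hx (by linarith : (1 : ℝ) < 1 + ε))
    obtain ⟨hfc, hfd, ⟨Cf, hCf⟩, _, _, _, _⟩ := hfF
    set g : ℂ → ℂ := fun w => ∑ j, f w j * (starRingEnd ℂ) (z j) with hg_def
    have hmemI : ∀ t : ℝ, ((t : ℂ) * Complex.I) ∈ closedStrip := by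
      intro t
      show ((t : ℂ) * Complex.I).re ∈ Icc (0 : ℝ) 1
      simp
    have hmemI1 : ∀ t : ℝ, (1 + (t : ℂ) * Complex.I) ∈ closedStrip := by
      intro t
      show (1 + (t : ℂ) * Complex.I).re ∈ Icc (0 : ℝ) 1
      simp
    -- the boundary bounds
    have hline0 : ∀ w ∈ Complex.re ⁻¹' {0}, ‖g w‖ ≤ A * (1 + ε) := by
      intro w hw
      have hw0 : w.re = 0 := hw
      have hwI : w = (w.im : ℂ) * Complex.I := by
        apply Complex.ext <;> simp [hw0]
      have bdd0 : BddAbove (Set.range fun t : ℝ => N0 (f ((t : ℂ) * Complex.I))) := by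
        refine ⟨C0 * Cf, ?_⟩
        rintro _ ⟨t, rfl⟩
        exact le_trans (hup0 _) (mul_le_mul_of_nonneg_left (hCf _ (hmemI t)) hC00)
      have hfw : N0 (f w) ≤ 1 + ε := by
        have h1 : N0 (f ((w.im : ℂ) * Complex.I))
            ≤ ⨆ t : ℝ, N0 (f ((t : ℂ) * Complex.I)) := le_ciSup bdd0 w.im
        rw [← hwI] at h1
        exact h1.trans ((le_max_left _ _).trans hfn.le)
      calc ‖g w‖ = ‖∑ j, f w j * (starRingEnd ℂ) (z j)‖ := rfl
        _ ≤ A * N0 (f w) := Stmt7Aux.abs_inner_le_dual hN0 z (f w)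
        _ ≤ A * (1 + ε) := mul_le_mul_of_nonneg_left hfw hA
    have hline1 : ∀ w ∈ Complex.re ⁻¹' {1}, ‖g w‖ ≤ B * (1 + ε) := by
      intro w hw
      have hw1 : w.re = 1 := hw
      have hwI : w = 1 + (w.im : ℂ) * Complex.I := by
        apply Complex.ext <;> simp [hw1]
      have bdd1 : BddAbove (Set.range fun t : ℝ => N1 (f (1 + (t : ℂ) * Complex.I))) := by
        refine ⟨C1 * Cf, ?_⟩
        rintro _ ⟨t, rfl⟩
        exact le_trans (hup1 _) (mul_le_mul_of_nonneg_left (hCf _ (hmemI1 t)) hC10)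
      have hfw : N1 (f w) ≤ 1 + ε := by
        have h1 : N1 (f (1 + (w.im : ℂ) * Complex.I))
            ≤ ⨆ t : ℝ, N1 (f (1 + (t : ℂ) * Complex.I)) := le_ciSup bdd1 w.im
        rw [← hwI] at h1
        exact h1.trans ((le_max_right _ _).trans hfn.le)
      calc ‖g w‖ = ‖∑ j, f w j * (starRingEnd ℂ) (z j)‖ := rfl
        _ ≤ B * N1 (f w) := Stmt7Aux.abs_inner_le_dual hN1 z (f w)
        _ ≤ B * (1 + ε) := mul_le_mul_of_nonneg_left hfw hB
    -- analyticity and boundedness of g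
    have hgc : ContinuousOn g closedStrip := by
      refine continuousOn_finset_sum _ fun j _ => ContinuousOn.mul ?_ continuousOn_const
      exact (continuous_apply j).comp_continuousOn hfc
    have hd : DiffContOnCl ℂ g (Complex.HadamardThreeLines.verticalStrip 0 1) := by
      constructor
      · refine DifferentiableOn.fun_sum fun j _ => DifferentiableOn.mul_const ?_
          _
        exact (ContinuousLinearMap.proj j :
          (Fin n → ℂ) →L[ℂ] ℂ).differentiable.comp_differentiableOn hfd
      · refine hgc.mono ?_
        refine closure_minimal ?_ (isClosed_Icc.preimage Complex.continuous_re)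
        exact fun w hw => ⟨le_of_lt hw.1, le_of_lt hw.2⟩
    have hbd : BddAbove ((norm ∘ g) '' Complex.HadamardThreeLines.verticalClosedStrip 0 1) := by
      refine ⟨Cf * ∑ j, ‖z j‖, ?_⟩
      rintro _ ⟨w, hw, rfl⟩
      calc ‖g w‖ = ‖∑ j, f w j * (starRingEnd ℂ) (z j)‖ := rfl
        _ ≤ ∑ j, ‖f w j * (starRingEnd ℂ) (z j)‖ := norm_sum_le _ _
        _ ≤ ∑ j, Cf * ‖z j‖ := by
            refine Finset.sum_le_sum fun j _ => ?_
            rw [norm_mul, Complex.norm_conj]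
            refine mul_le_mul_of_nonneg_right ?_ (norm_nonneg _)
            exact le_trans (by simpa using norm_le_pi_norm (f w) j) (hCf w hw)
        _ = Cf * ∑ j, ‖z j‖ := by rw [Finset.mul_sum]
    have hz : (l : ℂ) ∈ Complex.HadamardThreeLines.verticalClosedStrip 0 1 := by
      show (l : ℂ).re ∈ Icc (0 : ℝ) 1
      simpa using hl
    have hada := Complex.HadamardThreeLines.norm_le_interp_of_mem_verticalClosedStrip'
      (f := g) zero_lt_one hz hd hbd hline0 hline1
    simp only [sub_zero, div_one] at hada
    rw [Complex.ofReal_re] at hada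
    have hgl : g (l : ℂ) = ∑ j, x j * (starRingEnd ℂ) (z j) := by
      simp only [hg_def, hfl]
    rw [hgl] at hada
    refine le_trans hada ?_
    have hpos : (0 : ℝ) ≤ 1 + ε := by linarith
    rw [Real.mul_rpow hA hpos, Real.mul_rpow hB hpos]
    have hone : (1 + ε) ^ (1 - l) * (1 + ε) ^ l = 1 + ε := by
      rw [← Real.rpow_add (by linarith : (0:ℝ) < 1 + ε), sub_add_cancel, Real.rpow_one]
    refine le_of_eq ?_
    rw [show A ^ (1 - l) * (1 + ε) ^ (1 - l) * (B ^ l * (1 + ε) ^ l)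
        = A ^ (1 - l) * B ^ l * ((1 + ε) ^ (1 - l) * (1 + ε) ^ l) from by ring, hone, hM_def]
  -- conclude
  refine le_of_forall_pos_le_add fun δ hδ => ?_
  rcases eq_or_lt_of_le hM with hM0 | hMpos
  · have h1 := key 1 one_pos
    rw [← hM0] at h1
    simpa using le_trans (by linarith : ‖∑ j, x j * (starRingEnd ℂ) (z j)‖ ≤ M)
      (by linarith)
  · have h1 := key (δ / M) (div_pos hδ hMpos)
    have : M * (1 + δ / M) = M + δ := by field_simp
    linarith [h1, this.symm.le]
end
end

section
/- Let ‖·‖₀, ‖·‖₁ be norms on ℂⁿ with unit balls K, T, and let C_λ(K,T) be the unit ball of the complex interpolation norm ‖·‖_λ. Then C_λ(K,T) ⊆ L_λ(K,T), i.e., the complex interpolation body is contained in the logarithmic mean of K and T. -/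
open MeasureTheory Set

noncomputable section

/-! ### Auxiliary lemmas -/

/-- Type synonym used to endow `Fin n → ℂ` with the norm `N`. -/
def Wrap (n : ℕ) : Type := Fin n → ℂ
noncomputable instance {n : ℕ} : AddCommGroup (Wrap n) := inferInstanceAs (AddCommGroup (Fin n → ℂ))
noncomputable instance {n : ℕ} : Module ℂ (Wrap n) := inferInstanceAs (Module ℂ (Fin n → ℂ))
noncomputable instance {n : ℕ} : FiniteDimensional ℂ (Wrap n) :=
  inferInstanceAs (FiniteDimensional ℂ (Fin n → ℂ))

lemma isNormC_bounds {n : ℕ} (N : (Fin n → ℂ) → ℝ) (hN : IsNormC N) :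
    ∃ C : ℝ, 0 < C ∧ (∀ x, N x ≤ C * ‖x‖) ∧ (∀ x, ‖x‖ ≤ C * N x) := by
  obtain ⟨hnn, hzero, hsmul, hadd⟩ := hN
  letI : NormedAddCommGroup (Wrap n) := AddGroupNorm.toNormedAddCommGroup
    { toFun := N
      map_zero' := (hzero 0).mpr rfl
      add_le' := hadd
      neg' := fun x => by
        have h := hsmul (-1) x
        have e : N ((-1 : ℂ) • x) = N x := h.trans (by simp)
        exact (congrArg N (neg_one_smul ℂ (x : Fin n → ℂ))).symm.trans e
      eq_zero_of_map_eq_zero' := fun x h => (hzero x).mp h }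
  letI : NormedSpace ℂ (Wrap n) :=
    ⟨fun a x => le_of_eq (hsmul a x)⟩
  let e₁ : (Fin n → ℂ) →ₗ[ℂ] Wrap n :=
    { toFun := id, map_add' := fun _ _ => rfl, map_smul' := fun _ _ => rfl }
  let e₂ : Wrap n →ₗ[ℂ] (Fin n → ℂ) :=
    { toFun := id, map_add' := fun _ _ => rfl, map_smul' := fun _ _ => rfl }
  let f₁ := LinearMap.toContinuousLinearMap e₁
  let f₂ := LinearMap.toContinuousLinearMap e₂
  refine ⟨max ‖f₁‖ ‖f₂‖ + 1, by positivity, fun x => ?_, fun x => ?_⟩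
  · calc N x = ‖f₁ x‖ := rfl
    _ ≤ ‖f₁‖ * ‖x‖ := f₁.le_opNorm x
    _ ≤ (max ‖f₁‖ ‖f₂‖ + 1) * ‖x‖ := by
        apply mul_le_mul_of_nonneg_right _ (norm_nonneg x)
        have := le_max_left ‖f₁‖ ‖f₂‖; linarith
  · calc ‖x‖ = ‖f₂ (x : Wrap n)‖ := rfl
    _ ≤ ‖f₂‖ * N x := f₂.le_opNorm x
    _ ≤ (max ‖f₁‖ ‖f₂‖ + 1) * N x := by
        apply mul_le_mul_of_nonneg_right _ (hnn x)
        have := le_max_right ‖f₁‖ ‖f₂‖; linarith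

lemma abs_sum_le {n : ℕ} (x θ : Fin n → ℂ) :
    ‖∑ j, x j * (starRingEnd ℂ) (θ j)‖ ≤ ‖x‖ * ∑ j, ‖θ j‖ := by
  calc ‖∑ j, x j * (starRingEnd ℂ) (θ j)‖
      ≤ ∑ j, ‖x j * (starRingEnd ℂ) (θ j)‖ := by
        simpa using norm_sum_le Finset.univ (fun j => x j * (starRingEnd ℂ) (θ j))
    _ ≤ ∑ j, ‖x‖ * ‖θ j‖ := by
        apply Finset.sum_le_sum
        intro j _
        rw [norm_mul, Complex.norm_conj]
        apply mul_le_mul_of_nonneg_right _ (norm_nonneg _)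
        simpa using norm_le_pi_norm x j
    _ = ‖x‖ * ∑ j, ‖θ j‖ := by rw [Finset.mul_sum]

lemma crinner_le_abs {n : ℕ} (x θ : Fin n → ℂ) :
    crinner x θ ≤ ‖∑ j, x j * (starRingEnd ℂ) (θ j)‖ :=
  Complex.re_le_norm _

lemma ball_image_bddAbove {n : ℕ} (N : (Fin n → ℂ) → ℝ) (hN : IsNormC N) (θ : Fin n → ℂ) :
    BddAbove ((fun x => crinner x θ) '' {x | N x ≤ 1}) := by
  obtain ⟨C, hC, _, h2⟩ := isNormC_bounds N hN
  refine ⟨C * ∑ j, ‖θ j‖, ?_⟩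
  rintro r ⟨x, hx, rfl⟩
  calc crinner x θ ≤ ‖∑ j, x j * (starRingEnd ℂ) (θ j)‖ := crinner_le_abs x θ
    _ ≤ ‖x‖ * ∑ j, ‖θ j‖ := abs_sum_le x θ
    _ ≤ (C * 1) * ∑ j, ‖θ j‖ := by
        apply mul_le_mul_of_nonneg_right _ (by positivity)
        calc ‖x‖ ≤ C * N x := h2 x
          _ ≤ C * 1 := mul_le_mul_of_nonneg_left hx hC.le
    _ = C * ∑ j, ‖θ j‖ := by ring

lemma csuppFn_nonneg {n : ℕ} (N : (Fin n → ℂ) → ℝ) (hN : IsNormC N) (θ : Fin n → ℂ) :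
    0 ≤ csuppFn {x | N x ≤ 1} θ := by
  have h0 : (0 : ℝ) ∈ (fun x => crinner x θ) '' {x | N x ≤ 1} := by
    refine ⟨0, ?_, by simp [crinner]⟩
    show N 0 ≤ 1
    rw [(hN.2.1 0).mpr rfl]
    norm_num
  exact le_csSup (ball_image_bddAbove N hN θ) h0

lemma pairing_le {n : ℕ} (N : (Fin n → ℂ) → ℝ) (hN : IsNormC N) (θ y : Fin n → ℂ) :
    ‖∑ j, y j * (starRingEnd ℂ) (θ j)‖ ≤ N y * csuppFn {x | N x ≤ 1} θ := by
  obtain ⟨hnn, hzero, hsmul, hadd⟩ := id hN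
  set s := ∑ j, y j * (starRingEnd ℂ) (θ j) with hs
  by_cases hy : y = 0
  · subst hy
    simp only [hs, Pi.zero_apply, zero_mul, Finset.sum_const_zero, norm_zero]
    exact mul_nonneg (hnn 0) (csuppFn_nonneg N hN θ)
  · have hNy : 0 < N y := lt_of_le_of_ne (hnn y) (fun h => hy ((hzero y).mp h.symm))
    by_cases hs0 : s = 0
    · rw [hs0, norm_zero]
      exact mul_nonneg (hnn y) (csuppFn_nonneg N hN θ)
    · set a : ℂ := (starRingEnd ℂ) s / (‖s‖ : ℂ) with ha
      have habs : ‖a‖ = 1 := by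
        rw [ha, norm_div, Complex.norm_conj, Complex.norm_real, norm_norm,
          div_self (norm_ne_zero_iff.mpr hs0)]
      have has : a * s = (‖s‖ : ℂ) := by
        rw [ha, div_mul_eq_mul_div, mul_comm, Complex.mul_conj, Complex.normSq_eq_norm_sq]
        push_cast
        rw [pow_two, mul_div_assoc, div_self (by exact_mod_cast norm_ne_zero_iff.mpr hs0), mul_one]
      set x : Fin n → ℂ := (a * (N y : ℂ)⁻¹) • y with hx
      have hxball : N x ≤ 1 := by
        rw [hx, hsmul, norm_mul, habs, one_mul, norm_inv, Complex.norm_real, Real.norm_eq_abs, abs_of_pos hNy,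
          inv_mul_cancel₀ hNy.ne']
      have hcr : crinner x θ = ‖s‖ / N y := by
        simp only [crinner, hx]
        have h1 : ∑ j, ((a * (N y : ℂ)⁻¹) • y) j * (starRingEnd ℂ) (θ j)
            = (a * (N y : ℂ)⁻¹) * s := by
          rw [hs, Finset.mul_sum]
          apply Finset.sum_congr rfl
          intro j _
          simp only [Pi.smul_apply, smul_eq_mul]; ring
        rw [h1, mul_comm a, mul_assoc, has, ← Complex.ofReal_inv, ← Complex.ofReal_mul,
          Complex.ofReal_re]
        ring
      have hle : ‖s‖ / N y ≤ csuppFn {x | N x ≤ 1} θ := by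
        rw [← hcr]
        exact le_csSup (ball_image_bddAbove N hN θ) ⟨x, hxball, rfl⟩
      calc ‖s‖ = N y * (‖s‖ / N y) := by field_simp
        _ ≤ N y * csuppFn {x | N x ≤ 1} θ := mul_le_mul_of_nonneg_left hle (hnn y)

lemma sq_tendsto_atTop : Filter.Tendsto (fun t : ℝ => t ^ 2) Filter.atTop Filter.atTop :=
  Filter.tendsto_pow_atTop two_ne_zero

lemma sq_tendsto_atBot : Filter.Tendsto (fun t : ℝ => t ^ 2) Filter.atBot Filter.atTop := by
  have : (fun t : ℝ => t ^ 2) = (fun t : ℝ => t ^ 2) ∘ (fun t : ℝ => -t) := by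
    funext t; simp [neg_sq]
  rw [this]
  exact sq_tendsto_atTop.comp Filter.tendsto_neg_atBot_atTop

lemma exp_decay_aux (c : ℝ) (x : ℝ) (F : Filter ℝ)
    (h : Filter.Tendsto (fun t : ℝ => t ^ 2) F Filter.atTop) :
    Filter.Tendsto (fun t : ℝ => Real.exp (c - t ^ 2) * x) F (nhds 0) := by
  have h1 : Filter.Tendsto (fun t : ℝ => c - t ^ 2) F Filter.atBot :=
    Filter.tendsto_atBot_add_const_left _ c (Filter.tendsto_neg_atTop_atBot.comp h)
  simpa using (Real.tendsto_exp_atBot.comp h1).mul_const x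

lemma memF_exists {n : ℕ} (l : ℝ) (hl : l ∈ Icc (0:ℝ) 1) (x : Fin n → ℂ) :
    MemF (fun w => Complex.exp (w ^ 2 - (l : ℂ) ^ 2) • x) ∧
      (fun w => Complex.exp (w ^ 2 - (l : ℂ) ^ 2) • x) (l : ℂ) = x := by
  constructor
  · have hcont : Continuous (fun w : ℂ => Complex.exp (w ^ 2 - (l : ℂ) ^ 2) • x) :=
      (Complex.continuous_exp.comp (by continuity)).smul continuous_const
    have hdiff : Differentiable ℂ (fun w : ℂ => Complex.exp (w ^ 2 - (l : ℂ) ^ 2) • x) := by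
      apply Differentiable.smul_const
      exact ((differentiable_id.pow 2).sub_const _).cexp
    have hnorm : ∀ w : ℂ, ‖Complex.exp (w ^ 2 - (l : ℂ) ^ 2) • x‖
        = Real.exp (w.re ^ 2 - w.im ^ 2 - l ^ 2) * ‖x‖ := by
      intro w
      rw [norm_smul, Complex.norm_exp]
      congr 2
      rw [Complex.sub_re]
      rw [pow_two, Complex.mul_re]
      have : ((l:ℂ)^2).re = l^2 := by
        rw [pow_two, Complex.mul_re]; simp [pow_two]
      rw [this]; ring
    refine ⟨hcont.continuousOn, hdiff.differentiableOn, ⟨Real.exp 1 * ‖x‖, ?_⟩, ?_, ?_, ?_, ?_⟩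
    · intro w hw
      rw [hnorm w]
      apply mul_le_mul_of_nonneg_right _ (norm_nonneg x)
      apply Real.exp_le_exp.mpr
      obtain ⟨h0, h1⟩ := hw
      nlinarith [sq_nonneg w.im, sq_nonneg l]
    all_goals {
      apply squeeze_zero_norm (a := fun t : ℝ => Real.exp (1 - t ^ 2) * ‖x‖)
      · intro t
        rw [hnorm]
        apply mul_le_mul_of_nonneg_right _ (norm_nonneg x)
        apply Real.exp_le_exp.mpr
        simp only [Complex.add_re, Complex.add_im, Complex.one_re, Complex.one_im,
          Complex.mul_re, Complex.mul_im, Complex.I_re, Complex.I_im, Complex.ofReal_re,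
          Complex.ofReal_im]
        nlinarith [sq_nonneg l]
      · first
        | exact exp_decay_aux 1 ‖x‖ _ sq_tendsto_atTop
        | exact exp_decay_aux 1 ‖x‖ _ sq_tendsto_atBot
    }
  · simp

open Complex HadamardThreeLines in
lemma openStrip_eq : openStrip = verticalStrip 0 1 := rfl

open Complex HadamardThreeLines in
lemma closedStrip_eq : closedStrip = verticalClosedStrip 0 1 := rfl

open Complex HadamardThreeLines in
lemma closure_strip : closure (verticalStrip 0 1) = verticalClosedStrip 0 1 := by
  rw [verticalClosedStrip, ← closure_Ioo zero_ne_one, ← Complex.closure_preimage_re]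
  rfl

open Complex HadamardThreeLines in
lemma key_estimate {n : ℕ} (N0 N1 : (Fin n → ℂ) → ℝ) (hN0 : IsNormC N0) (hN1 : IsNormC N1)
    (l : ℝ) (hl : l ∈ Icc (0:ℝ) 1) (θ : Fin n → ℂ) (f : ℂ → Fin n → ℂ) (hf : MemF f) :
    crinner (f (l : ℂ)) θ ≤
      ((⨆ t : ℝ, N0 (f (t * Complex.I))) * csuppFn {x | N0 x ≤ 1} θ) ^ (1 - l) *
      ((⨆ t : ℝ, N1 (f (1 + t * Complex.I))) * csuppFn {x | N1 x ≤ 1} θ) ^ l := by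
  obtain ⟨hcont, hdiff, ⟨C, hC⟩, _⟩ := hf
  obtain ⟨C0, hC0, hC0u, _⟩ := isNormC_bounds N0 hN0
  obtain ⟨C1, hC1, hC1u, _⟩ := isNormC_bounds N1 hN1
  set g : ℂ → ℂ := fun w => ∑ j, f w j * (starRingEnd ℂ) (θ j) with hg
  have hCnn : 0 ≤ C := le_trans (norm_nonneg _) (hC 0 (by simp [closedStrip]))
  have bdd0 : BddAbove (Set.range fun t : ℝ => N0 (f (t * Complex.I))) := by
    refine ⟨C0 * C, ?_⟩
    rintro r ⟨t, rfl⟩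
    calc N0 (f (t * Complex.I)) ≤ C0 * ‖f (t * Complex.I)‖ := hC0u _
      _ ≤ C0 * C := mul_le_mul_of_nonneg_left (hC _ (by simp [closedStrip])) hC0.le
  have bdd1 : BddAbove (Set.range fun t : ℝ => N1 (f (1 + t * Complex.I))) := by
    refine ⟨C1 * C, ?_⟩
    rintro r ⟨t, rfl⟩
    calc N1 (f (1 + t * Complex.I)) ≤ C1 * ‖f (1 + t * Complex.I)‖ := hC1u _
      _ ≤ C1 * C := mul_le_mul_of_nonneg_left (hC _ (by simp [closedStrip])) hC1.le
  have hd : DiffContOnCl ℂ g (verticalStrip 0 1) := by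
    constructor
    · apply DifferentiableOn.fun_sum
      intro j _
      apply DifferentiableOn.mul_const
      exact ((ContinuousLinearMap.proj j :
        (Fin n → ℂ) →L[ℂ] ℂ).differentiable).comp_differentiableOn (openStrip_eq ▸ hdiff)
    · rw [closure_strip]
      apply continuousOn_finset_sum
      intro j _
      apply ContinuousOn.mul _ continuousOn_const
      exact ((ContinuousLinearMap.proj j :
        (Fin n → ℂ) →L[ℂ] ℂ).continuous).comp_continuousOn (closedStrip_eq ▸ hcont)
  have hB : BddAbove ((norm ∘ g) '' verticalClosedStrip 0 1) := by
    refine ⟨C * ∑ j, ‖θ j‖, ?_⟩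
    rintro r ⟨w, hw, rfl⟩
    calc ‖g w‖ ≤ ‖f w‖ * ∑ j, ‖θ j‖ := abs_sum_le (f w) θ
      _ ≤ C * ∑ j, ‖θ j‖ :=
        mul_le_mul_of_nonneg_right (hC w (closedStrip_eq ▸ hw)) (by positivity)
  have ha : ∀ z ∈ Complex.re ⁻¹' {0}, ‖g z‖ ≤
      (⨆ t : ℝ, N0 (f (t * Complex.I))) * csuppFn {x | N0 x ≤ 1} θ := by
    intro z hz
    have hz0 : z.re = 0 := hz
    have hzz : z = (z.im : ℂ) * Complex.I := by
      apply Complex.ext <;> simp [hz0]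
    calc ‖g z‖ ≤ N0 (f z) * csuppFn {x | N0 x ≤ 1} θ := pairing_le N0 hN0 θ (f z)
      _ ≤ (⨆ t : ℝ, N0 (f (t * Complex.I))) * csuppFn {x | N0 x ≤ 1} θ := by
          apply mul_le_mul_of_nonneg_right _ (csuppFn_nonneg N0 hN0 θ)
          rw [hzz]
          exact le_ciSup bdd0 z.im
  have hb : ∀ z ∈ Complex.re ⁻¹' {1}, ‖g z‖ ≤
      (⨆ t : ℝ, N1 (f (1 + t * Complex.I))) * csuppFn {x | N1 x ≤ 1} θ := by
    intro z hz
    have hz1 : z.re = 1 := hz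
    have hzz : z = 1 + (z.im : ℂ) * Complex.I := by
      apply Complex.ext <;> simp [hz1]
    calc ‖g z‖ ≤ N1 (f z) * csuppFn {x | N1 x ≤ 1} θ := pairing_le N1 hN1 θ (f z)
      _ ≤ (⨆ t : ℝ, N1 (f (1 + t * Complex.I))) * csuppFn {x | N1 x ≤ 1} θ := by
          apply mul_le_mul_of_nonneg_right _ (csuppFn_nonneg N1 hN1 θ)
          rw [hzz]
          exact le_ciSup bdd1 z.im
  have hmem : (l : ℂ) ∈ verticalClosedStrip 0 1 := by
    simpa [verticalClosedStrip] using hl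
  have hmain := norm_le_interp_of_mem_verticalClosedStrip₀₁' g hmem hd hB ha hb
  rw [Complex.ofReal_re] at hmain
  calc crinner (f (l:ℂ)) θ ≤ ‖∑ j, f (l:ℂ) j * (starRingEnd ℂ) (θ j)‖ :=
        crinner_le_abs _ θ
    _ = ‖g (l : ℂ)‖ := rfl
    _ ≤ _ := hmain

/-- The complex interpolation body is contained in the logarithmic mean. -/
theorem stmt_8 {n : ℕ} (N0 N1 : (Fin n → ℂ) → ℝ) (hN0 : IsNormC N0) (hN1 : IsNormC N1)
    (l : ℝ) (hl : l ∈ Icc (0 : ℝ) 1) :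
    {x | interpNorm N0 N1 l x ≤ 1} ⊆ clogMean l {x | N0 x ≤ 1} {x | N1 x ≤ 1} := by
  intro x hx θ
  simp only [mem_setOf_eq, interpNorm] at hx
  obtain ⟨hnn0, -, -, -⟩ := id hN0
  obtain ⟨hnn1, -, -, -⟩ := id hN1
  set A := csuppFn {x | N0 x ≤ 1} θ with hA
  set B := csuppFn {x | N1 x ≤ 1} θ with hB
  have hAnn : 0 ≤ A := csuppFn_nonneg N0 hN0 θ
  have hBnn : 0 ≤ B := csuppFn_nonneg N1 hN1 θ
  set P := A ^ (1 - l) * B ^ l with hP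
  have hPnn : 0 ≤ P :=
    mul_nonneg (Real.rpow_nonneg hAnn _) (Real.rpow_nonneg hBnn _)
  show crinner x θ ≤ P
  refine le_of_forall_pos_le_add (fun ε hε => ?_)
  set δ := ε / (P + 1) with hδ
  have hPpos : (0:ℝ) < P + 1 := by linarith
  have hδpos : 0 < δ := div_pos hε hPpos
  obtain ⟨hf₀, hf₀l⟩ := memF_exists l hl x
  have hne : (fNorm N0 N1 '' {f | MemF f ∧ f (l : ℂ) = x}).Nonempty :=
    ⟨_, ⟨_, ⟨hf₀, hf₀l⟩, rfl⟩⟩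
  have hbdd : BddBelow (fNorm N0 N1 '' {f | MemF f ∧ f (l : ℂ) = x}) := by
    refine ⟨0, ?_⟩
    rintro r ⟨f, -, rfl⟩
    exact le_max_of_le_left (Real.iSup_nonneg fun t => hnn0 _)
  have hlt : sInf (fNorm N0 N1 '' {f | MemF f ∧ f (l : ℂ) = x}) < 1 + δ :=
    lt_of_le_of_lt hx (by linarith)
  obtain ⟨r, ⟨f, ⟨hfF, hfl⟩, rfl⟩, hrlt⟩ := (csInf_lt_iff hbdd hne).mp hlt
  set M0 := ⨆ t : ℝ, N0 (f (t * Complex.I)) with hM0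
  set M1 := ⨆ t : ℝ, N1 (f (1 + t * Complex.I)) with hM1
  have hM0nn : 0 ≤ M0 := Real.iSup_nonneg fun t => hnn0 _
  have hM1nn : 0 ≤ M1 := Real.iSup_nonneg fun t => hnn1 _
  have hM0le : M0 ≤ 1 + δ := le_of_lt (lt_of_le_of_lt (le_max_left _ _) hrlt)
  have hM1le : M1 ≤ 1 + δ := le_of_lt (lt_of_le_of_lt (le_max_right _ _) hrlt)
  have hkey := key_estimate N0 N1 hN0 hN1 l hl θ f hfF
  rw [hfl] at hkey
  have h1l : 0 ≤ 1 - l := by linarith [hl.2]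
  have hc : (0:ℝ) < 1 + δ := by linarith
  have hstep : (M0 * A) ^ (1 - l) * (M1 * B) ^ l
      ≤ ((1 + δ) * A) ^ (1 - l) * ((1 + δ) * B) ^ l := by
    apply mul_le_mul
    · exact Real.rpow_le_rpow (mul_nonneg hM0nn hAnn)
        (mul_le_mul_of_nonneg_right hM0le hAnn) h1l
    · exact Real.rpow_le_rpow (mul_nonneg hM1nn hBnn)
        (mul_le_mul_of_nonneg_right hM1le hBnn) hl.1
    · exact Real.rpow_nonneg (mul_nonneg hM1nn hBnn) _
    · exact Real.rpow_nonneg (by positivity) _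
  have heq : ((1 + δ) * A) ^ (1 - l) * ((1 + δ) * B) ^ l = (1 + δ) * P := by
    rw [Real.mul_rpow hc.le hAnn, Real.mul_rpow hc.le hBnn, hP]
    have hcc : (1 + δ) ^ (1 - l) * ((1 + δ):ℝ) ^ l = (1 + δ) := by
      rw [← Real.rpow_add hc]
      norm_num
    calc (1+δ) ^ (1-l) * A ^ (1-l) * ((1+δ) ^ l * B ^ l)
        = ((1+δ) ^ (1-l) * (1+δ) ^ l) * (A ^ (1-l) * B ^ l) := by ring
      _ = (1+δ) * (A ^ (1-l) * B ^ l) := by rw [hcc]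
  have hfinal : (1 + δ) * P ≤ P + ε := by
    have hδP : δ * P ≤ ε := by
      rw [hδ, div_mul_eq_mul_div, div_le_iff₀ hPpos]
      nlinarith
    nlinarith
  calc crinner x θ ≤ (M0 * A) ^ (1 - l) * (M1 * B) ^ l := hkey
    _ ≤ ((1 + δ) * A) ^ (1 - l) * ((1 + δ) * B) ^ l := hstep
    _ = (1 + δ) * P := heq
    _ ≤ P + ε := hfinal
end
end
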